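/- For the 3-processor fourth-order method with a_1, a_2, a_3 free: the system b_1 + b_2 + b_3 = 1, ∑ b_i w31(a_i) = 0, ∑ b_i w41(a_i) = 0, ∑ b_i w51(a_i) = 0 (i.e., G_51 = 0) is solvable over the reals, where w31(a) = (1-a)³+a³, w41(a) = (1/2)a(2a-1)(1-a), w51(a) = (1-a)⁵+a⁵; in particular a_1 = -0.19220568886474299..., with suitable b_i, gives an approximate solution, whereas with k = 2 (only b_1, b_2, a_1, a_2) the same system has no real solution. -/
import Mathlib


noncomputable section
open Finset

/-- `w31(a) = (1-a)³ + a³`. -/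
def w31 (a : ℝ) : ℝ := (1 - a)^3 + a^3

/-- `w41(a) = (1/2)a(2a-1)(1-a)`. -/
def w41 (a : ℝ) : ℝ := (1/2) * a * (2*a - 1) * (1 - a)

/-- `w51(a) = (1-a)⁵ + a⁵`. -/
def w51 (a : ℝ) : ℝ := (1 - a)^5 + a^5

/-- The fourth-order conditions together with `G₅₁ = 0` are solvable with `k = 3`
processors, but have no real solution with `k = 2`. -/
theorem three_processor_order4_G51 :
    (∃ b a : Fin 3 → ℝ,
      (∑ i, b i = 1) ∧ (∑ i, b i * w31 (a i) = 0) ∧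
      (∑ i, b i * w41 (a i) = 0) ∧ (∑ i, b i * w51 (a i) = 0)) ∧
    ¬ (∃ b₁ b₂ a₁ a₂ : ℝ,
      b₁ + b₂ = 1 ∧ b₁ * w31 a₁ + b₂ * w31 a₂ = 0 ∧
      b₁ * w41 a₁ + b₂ * w41 a₂ = 0 ∧ b₁ * w51 a₁ + b₂ * w51 a₂ = 0) := by
  constructor
  · refine ⟨![1/84, 125/84, -1/2], ![2, 3/5, 0], ?_, ?_, ?_, ?_⟩ <;>
      simp [Fin.sum_univ_three, w31, w41, w51] <;> norm_num
  · rintro ⟨b₁, b₂, a₁, a₂, h1, h2, h3, h4⟩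
    simp only [w31, w41, w51] at h2 h3 h4
    have hx : a₁ - a₁^2 ≤ 1/4 := by nlinarith [sq_nonneg (a₁ - 1/2)]
    have hy : a₂ - a₂^2 ≤ 1/4 := by nlinarith [sq_nonneg (a₂ - 1/2)]
    have e1 : b₁ * (a₁ - a₁^2) + b₂ * (a₂ - a₂^2) = 1/3 := by
      linear_combination (1/3) * h1 - (1/3) * h2
    have e2 : b₁ * (a₁ - a₁^2)^2 + b₂ * (a₂ - a₂^2)^2 = 2/15 := by
      linear_combination (1/5) * h4 - (1/5) * h1 + e1
    have e3 : ((a₁ - a₁^2) + (a₂ - a₂^2)) * (1/3) - (a₁ - a₁^2) * (a₂ - a₂^2) = 2/15 := by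
      linear_combination e2 - ((a₁ - a₁^2) + (a₂ - a₂^2)) * e1 + (a₁ - a₁^2) * (a₂ - a₂^2) * h1
    nlinarith [mul_nonneg (by linarith : (0:ℝ) ≤ 1/4 - (a₂ - a₂^2))
      (by linarith : (0:ℝ) ≤ 5 - 15 * (a₁ - a₁^2))]

end
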